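/- Let (E,F) be a triangulation datum. The map θ ↦ 2θ (doubling every edge colour) is a bijection from Adm(E,F,3) onto the set of colourings in Adm(E,F,4) whose reduction e ↦ θ(e) − ⌊θ(e)⌋ is the zero colouring (equivalently, onto the integer-valued colourings in Adm(E,F,4)). -/

import Mathlib

/-- A colouring `θ : E → ℚ` is admissible for the triangulation datum `(E, F)`
and the integer `r` if every edge colour lies in `{0, 1/2, 1, …, (r-2)/2}` and
every triple of `F` satisfies the parity condition, the triangle inequalities,
and the upper bound constraint. -/
def IsAdmissible {E : Type*} (F : Multiset (E × E × E)) (r : ℕ) (θ : E → ℚ) : Prop :=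
  (∀ e : E, ∃ k : ℕ, k ≤ r - 2 ∧ θ e = (k : ℚ) / 2) ∧
  ∀ t ∈ F,
    (∃ z : ℤ, θ t.1 + θ t.2.1 + θ t.2.2 = (z : ℚ)) ∧
    θ t.1 ≤ θ t.2.1 + θ t.2.2 ∧
    θ t.2.1 ≤ θ t.1 + θ t.2.2 ∧
    θ t.2.2 ≤ θ t.1 + θ t.2.1 ∧
    θ t.1 + θ t.2.1 + θ t.2.2 ≤ (r : ℚ) - 2

/-- The set of admissible colourings of `(E, F)` for the integer `r`. -/
def Adm {E : Type*} (F : Multiset (E × E × E)) (r : ℕ) : Set (E → ℚ) :=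
  {θ | IsAdmissible F r θ}


/-- Doubling every edge colour is a bijection from `Adm(E,F,3)` onto the set of
colourings in `Adm(E,F,4)` whose reduction `e ↦ η e − ⌊η e⌋` is the zero
colouring (equivalently, the integer-valued colourings in `Adm(E,F,4)`). -/
theorem double_bijOn {E : Type*} (F : Multiset (E × E × E)) :
    Set.BijOn (fun θ : E → ℚ => fun e => 2 * θ e) (Adm F 3)
      {η ∈ Adm F 4 | (fun e => η e - ⌊η e⌋) = (0 : E → ℚ)} := by
  refine ⟨?_, ?_, ?_⟩
  · -- MapsTo
    rintro θ ⟨hcol, htri⟩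
    have hval : ∀ e, θ e = 0 ∨ θ e = 1/2 := by
      intro e
      obtain ⟨k, hk, he⟩ := hcol e
      interval_cases k
      · left; simpa using he
      · right; rw [he]; norm_num
    refine ⟨⟨?_, ?_⟩, ?_⟩
    · intro e
      rcases hval e with h | h
      · exact ⟨0, by norm_num, by simp [h]⟩
      · exact ⟨2, by norm_num, by dsimp; rw [h]; norm_num⟩
    · intro t ht
      obtain ⟨⟨z, hz⟩, h1, h2, h3, h4⟩ := htri t ht
      refine ⟨⟨2*z, by push_cast; linarith⟩, by dsimp; linarith, by dsimp; linarith,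
        by dsimp; linarith, by dsimp; push_cast at h4 ⊢; linarith⟩
    · funext e
      rcases hval e with h | h <;> simp [h]
  · -- InjOn
    intro θ₁ _ θ₂ _ h
    funext e
    have := congrFun h e
    dsimp at this
    linarith
  · -- SurjOn
    rintro η ⟨⟨hcol, htri⟩, hfl⟩
    have hval : ∀ e, η e = 0 ∨ η e = 1 := by
      intro e
      obtain ⟨k, hk, he⟩ := hcol e
      have hz := congrFun hfl e
      dsimp at hz
      interval_cases k
      · left; simpa using he
      · exfalso
        rw [he] at hz
        norm_num [Int.fract] at hz
      · right; rw [he]; norm_num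
    refine ⟨fun e => η e / 2, ⟨?_, ?_⟩, ?_⟩
    · intro e
      rcases hval e with h | h
      · exact ⟨0, by norm_num, by simp [h]⟩
      · exact ⟨1, by norm_num, by dsimp; rw [h]⟩
    · intro t ht
      obtain ⟨_, h1, h2, h3, h4⟩ := htri t ht
      norm_num at h4
      have hsum : η t.1 + η t.2.1 + η t.2.2 = 0 ∨ η t.1 + η t.2.1 + η t.2.2 = 2 := by
        rcases hval t.1 with ha | ha <;> rcases hval t.2.1 with hb | hb <;>
          rcases hval t.2.2 with hc | hc <;>
          rw [ha, hb, hc] at h1 h2 h3 h4 ⊢ <;> norm_num <;> linarith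
      refine ⟨?_, by dsimp; linarith, by dsimp; linarith, by dsimp; linarith, ?_⟩
      · rcases hsum with h | h
        · exact ⟨0, by push_cast; linarith⟩
        · exact ⟨1, by push_cast; linarith⟩
      · rcases hsum with h | h <;> dsimp <;> linarith
    · funext e
      ring
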